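/- Let H₁,...,Hₙ be commuting orthogonal projections, A a bounded operator, and E_S the conjugation average over S ⊆ {1,...,n}. Then for any r ∈ S, ‖A − E_S(A)‖ ≤ ‖A − E_{S∖{r}}(A)‖ + ‖A − E_{{r}}(A)‖, and consequently ‖A − E_S(A)‖ ≤ Σ_{r∈S} ‖A − E_{{r}}(A)‖ ≤ π Σ_{r∈S} ‖[Hᵣ, A]‖. -/

import Mathlib

open NormedSpace

variable {E : Type*} [NormedAddCommGroup E] [InnerProductSpace ℂ E] [CompleteSpace E]

/-- The average of `A` over conjugation by `e^{iθH}`, `θ` uniform on `[0, 2π]`. -/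
noncomputable def conjAvg (H A : E →L[ℂ] E) : E →L[ℂ] E :=
  (1 / (2 * Real.pi)) • ∫ θ in (0:ℝ)..(2 * Real.pi),
    exp (((θ : ℂ) * Complex.I) • H) * A * star (exp (((θ : ℂ) * Complex.I) • H))

/-- Iterated conjugation average `E_S` over the projections `H r`, `r ∈ S`. -/
noncomputable def conjAvgOver {n : ℕ} (H : Fin n → (E →L[ℂ] E)) (S : Finset (Fin n))
    (A : E →L[ℂ] E) : E →L[ℂ] E :=
  (S.sort (· ≤ ·)).foldr (fun r B => conjAvg (H r) B) A

set_option maxHeartbeats 1000000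

lemma exp_smul_idem (H : E →L[ℂ] E) (h : H * H = H) (z : ℂ) :
    exp (z • H) = 1 + (Complex.exp z - 1) • H := by
  have hpow : ∀ n : ℕ, H ^ (n + 1) = H := by
    intro n; induction n with
    | zero => simp
    | succ n ih => rw [pow_succ, ih, h]
  have hc : Summable (fun n : ℕ => ((n.factorial : ℂ))⁻¹ * z ^ n) := by
    simpa [smul_eq_mul] using expSeries_summable' (𝕂 := ℂ) z
  have hc' : Summable (fun n : ℕ => ((n+1).factorial : ℂ)⁻¹ * z ^ (n+1)) :=
    (summable_nat_add_iff 1).2 hc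
  have hz : Complex.exp z = 1 + ∑' n : ℕ, (((n+1).factorial : ℂ))⁻¹ * z ^ (n+1) := by
    rw [Complex.exp_eq_exp_ℂ]
    simp only [exp_eq_tsum ℂ, smul_eq_mul]
    rw [hc.tsum_eq_zero_add]
    norm_num
  have hs : Summable (fun n : ℕ => ((n.factorial : ℂ))⁻¹ • (z • H) ^ n) :=
    expSeries_summable' (𝕂 := ℂ) (z • H)
  simp only [exp_eq_tsum ℂ]
  rw [hs.tsum_eq_zero_add]
  have he : ∀ n : ℕ, ((n+1).factorial : ℂ)⁻¹ • (z • H) ^ (n+1)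
      = ((((n+1).factorial : ℂ))⁻¹ * z ^ (n+1)) • H := by
    intro n
    rw [smul_pow, hpow, smul_smul]
  simp only [he]
  rw [hc'.tsum_smul_const]
  have h2 : (∑' n : ℕ, (((n+1).factorial : ℂ))⁻¹ * z ^ (n+1)) = Complex.exp z - 1 := by
    rw [hz]; ring
  rw [h2]
  simp

lemma conjAvg_eq (H : E →L[ℂ] E) (hsa : IsSelfAdjoint H) (h : H * H = H) (A : E →L[ℂ] E) :
    conjAvg H A = A - H * A - A * H + (2:ℂ) • (H * A * H) := by
  have hπ : (0:ℝ) < Real.pi := Real.pi_pos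
  set f : ℝ → ℂ := fun θ => Complex.exp ((θ:ℂ) * Complex.I) - 1 with hf
  set g : ℝ → ℂ := fun θ => Complex.exp (-((θ:ℂ) * Complex.I)) - 1 with hg
  have hint : ∀ θ : ℝ,
      exp (((θ : ℂ) * Complex.I) • H) * A * star (exp (((θ : ℂ) * Complex.I) • H))
      = A + f θ • (H * A) + g θ • (A * H) + (f θ * g θ) • (H * A * H) := by
    intro θ
    rw [exp_smul_idem H h]
    have hstar : star ((1 : E →L[ℂ] E) + (Complex.exp ((θ:ℂ) * Complex.I) - 1) • H)
        = 1 + g θ • H := by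
      rw [star_add, star_one, star_smul, hsa.star_eq]
      congr 1
      simp [hg, RingHom.map_sub, ← Complex.exp_conj, map_mul, Complex.conj_I, Complex.conj_ofReal,
        mul_neg]
    rw [hstar]
    simp only [add_mul, mul_add, one_mul, mul_one, smul_mul_assoc, mul_smul_comm, smul_smul, smul_add, hf, hg]
    module
  have cf : Continuous f := by
    exact ((Complex.continuous_ofReal.mul continuous_const).cexp).sub continuous_const
  have cg : Continuous g := by
    exact (((Complex.continuous_ofReal.mul continuous_const).neg).cexp).sub continuous_const
  have iA : IntervalIntegrable (fun _ : ℝ => A) MeasureTheory.volume 0 (2*Real.pi) :=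
    continuous_const.intervalIntegrable _ _
  have i1 : IntervalIntegrable (fun θ => f θ • (H * A)) MeasureTheory.volume 0 (2*Real.pi) :=
    (cf.smul continuous_const).intervalIntegrable _ _
  have i2 : IntervalIntegrable (fun θ => g θ • (A * H)) MeasureTheory.volume 0 (2*Real.pi) :=
    (cg.smul continuous_const).intervalIntegrable _ _
  have i3 : IntervalIntegrable (fun θ => (f θ * g θ) • (H * A * H)) MeasureTheory.volume 0 (2*Real.pi) :=
    ((cf.mul cg).smul continuous_const).intervalIntegrable _ _
  have e1 : (∫ θ in (0:ℝ)..(2*Real.pi), Complex.exp ((θ:ℂ) * Complex.I)) = 0 := by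
    have : ∀ θ : ℝ, Complex.exp ((θ:ℂ) * Complex.I) = Complex.exp (Complex.I * (θ:ℂ)) := by
      intro θ; rw [mul_comm]
    simp only [this]
    rw [integral_exp_mul_complex Complex.I_ne_zero]
    have : Complex.I * ((2*Real.pi : ℝ):ℂ) = 2 * (Real.pi:ℂ) * Complex.I := by
      push_cast; ring
    rw [this, Complex.exp_two_pi_mul_I]
    simp
  have e2 : (∫ θ in (0:ℝ)..(2*Real.pi), Complex.exp (-((θ:ℂ) * Complex.I))) = 0 := by
    have : ∀ θ : ℝ, Complex.exp (-((θ:ℂ) * Complex.I)) = Complex.exp ((-Complex.I) * (θ:ℂ)) := by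
      intro θ; ring_nf
    simp only [this]
    rw [integral_exp_mul_complex (neg_ne_zero.2 Complex.I_ne_zero)]
    have : (-Complex.I) * ((2*Real.pi : ℝ):ℂ) = 2 * (Real.pi:ℂ) * (-Complex.I) := by
      push_cast; ring
    rw [this]
    have h2 : Complex.exp (2 * (Real.pi:ℂ) * -Complex.I) = 1 := by
      rw [show 2 * (Real.pi:ℂ) * -Complex.I = -(2 * (Real.pi:ℂ) * Complex.I) by ring]
      rw [Complex.exp_neg, Complex.exp_two_pi_mul_I, inv_one]
    rw [h2]
    simp
  have icf : IntervalIntegrable f MeasureTheory.volume 0 (2*Real.pi) :=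
    cf.intervalIntegrable _ _
  have icg : IntervalIntegrable g MeasureTheory.volume 0 (2*Real.pi) :=
    cg.intervalIntegrable _ _
  have ef : (∫ θ in (0:ℝ)..(2*Real.pi), f θ) = -(2*Real.pi:ℝ) := by
    simp only [hf]
    rw [intervalIntegral.integral_sub (f := fun θ:ℝ => Complex.exp ((θ:ℂ) * Complex.I)) ((Complex.continuous_ofReal.mul continuous_const).cexp.intervalIntegrable _ _) (continuous_const.intervalIntegrable _ _), e1]
    simp
  have eg : (∫ θ in (0:ℝ)..(2*Real.pi), g θ) = -(2*Real.pi:ℝ) := by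
    simp only [hg]
    rw [intervalIntegral.integral_sub (f := fun θ:ℝ => Complex.exp (-((θ:ℂ) * Complex.I))) (((Complex.continuous_ofReal.mul continuous_const).neg).cexp.intervalIntegrable _ _) (continuous_const.intervalIntegrable _ _), e2]
    simp
  have efg : (∫ θ in (0:ℝ)..(2*Real.pi), f θ * g θ) = (4*Real.pi:ℝ) := by
    have hfg : ∀ θ : ℝ, f θ * g θ = 2 - Complex.exp ((θ:ℂ) * Complex.I) - Complex.exp (-((θ:ℂ) * Complex.I)) := by
      intro θ
      have : Complex.exp ((θ:ℂ) * Complex.I) * Complex.exp (-((θ:ℂ) * Complex.I)) = 1 := by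
        rw [← Complex.exp_add]; simp
      simp only [hf, hg]
      linear_combination this
    have ie1 : IntervalIntegrable (fun θ:ℝ => Complex.exp ((θ:ℂ) * Complex.I)) MeasureTheory.volume 0 (2*Real.pi) :=
      ((Complex.continuous_ofReal.mul continuous_const).cexp).intervalIntegrable _ _
    have ie2 : IntervalIntegrable (fun θ:ℝ => Complex.exp (-((θ:ℂ) * Complex.I))) MeasureTheory.volume 0 (2*Real.pi) :=
      (((Complex.continuous_ofReal.mul continuous_const).neg).cexp).intervalIntegrable _ _
    simp only [hfg]
    rw [intervalIntegral.integral_sub ((continuous_const.intervalIntegrable _ _).sub ie1) ie2,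
        intervalIntegral.integral_sub (continuous_const.intervalIntegrable _ _) ie1, e1, e2]
    simp
    push_cast
    ring
  rw [conjAvg]
  rw [intervalIntegral.integral_congr (g := fun θ => A + f θ • (H * A) + g θ • (A * H) + (f θ * g θ) • (H * A * H)) (fun θ _ => hint θ)]
  rw [intervalIntegral.integral_add ((iA.add i1).add i2) i3,
      intervalIntegral.integral_add (iA.add i1) i2,
      intervalIntegral.integral_add iA i1,
      intervalIntegral.integral_const,
      intervalIntegral.integral_smul_const, intervalIntegral.integral_smul_const,
      intervalIntegral.integral_smul_const, ef, eg, efg]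
  have hne : (Real.pi:ℂ) ≠ 0 := by
    exact_mod_cast Complex.ofReal_ne_zero.2 (ne_of_gt hπ)
  match_scalars
  all_goals (field_simp; try ring)
  all_goals rfl

local notation "⟪" x ", " y "⟫" => @inner ℂ _ _ x y

lemma norm_proj_le_one (H : E →L[ℂ] E) (hsa : IsSelfAdjoint H) (h : H * H = H) : ‖H‖ ≤ 1 := by
  have hh := CStarRing.norm_star_mul_self (x := H)
  rw [hsa.star_eq, h] at hh
  nlinarith [norm_nonneg H]

lemma sa_inner_left (H : E →L[ℂ] E) (hsa : IsSelfAdjoint H) (u v : E) :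
    ⟪H u, v⟫ = ⟪u, H v⟫ := by
  have : ContinuousLinearMap.adjoint H = H := by
    rw [← ContinuousLinearMap.star_eq_adjoint, hsa.star_eq]
  conv_lhs => rw [← this]
  exact ContinuousLinearMap.adjoint_inner_left H v u

lemma norm_projSum_apply_le (H : E →L[ℂ] E) (hsa : IsSelfAdjoint H) (h : H * H = H)
    (A : E →L[ℂ] E) (x : E) :
    ‖((1 - H) * A * (1 - H) + H * A * H) x‖ ≤ ‖A‖ * ‖x‖ := by
  set Q : E →L[ℂ] E := 1 - H with hQdef
  have hQsa : IsSelfAdjoint Q := by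
    have h1 : IsSelfAdjoint (1 : E →L[ℂ] E) := IsSelfAdjoint.one _
    exact h1.sub hsa
  have hQP : ∀ v, Q (H v) = 0 := by
    intro v
    have : Q ∘L H = 0 := by
      rw [hQdef]
      ext w
      simp [ContinuousLinearMap.sub_apply, ← ContinuousLinearMap.mul_apply, h]
    calc Q (H v) = (Q ∘L H) v := rfl
    _ = 0 := by rw [this]; rfl
  have hPQ : ∀ v, H (Q v) = 0 := by
    intro v
    have : H ∘L Q = 0 := by
      rw [hQdef]
      ext w
      simp [ContinuousLinearMap.sub_apply, ← ContinuousLinearMap.mul_apply, h]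
    calc H (Q v) = (H ∘L Q) v := rfl
    _ = 0 := by rw [this]; rfl
  have horth : ∀ u v : E, ⟪Q u, H v⟫ = 0 := by
    intro u v
    rw [sa_inner_left Q hQsa, hQP]
    simp
  set a := Q (A (Q x)) with ha
  set b := H (A (H x)) with hb
  have happ : ((1 - H) * A * (1 - H) + H * A * H) x = a + b := by
    simp [ContinuousLinearMap.add_apply, ContinuousLinearMap.mul_apply, ha, hb, hQdef]
  rw [happ]
  have hab : ‖a + b‖ * ‖a + b‖ = ‖a‖ * ‖a‖ + ‖b‖ * ‖b‖ :=
    norm_add_sq_eq_norm_sq_add_norm_sq_of_inner_eq_zero a b (horth _ _)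
  have hx : ‖x‖ * ‖x‖ = ‖Q x‖ * ‖Q x‖ + ‖H x‖ * ‖H x‖ := by
    have hxd : x = Q x + H x := by simp [hQdef, ContinuousLinearMap.sub_apply]
    calc ‖x‖ * ‖x‖ = ‖Q x + H x‖ * ‖Q x + H x‖ := by rw [← hxd]
    _ = ‖Q x‖ * ‖Q x‖ + ‖H x‖ * ‖H x‖ :=
      norm_add_sq_eq_norm_sq_add_norm_sq_of_inner_eq_zero _ _ (horth _ _)
  have hQ1 : ‖Q‖ ≤ 1 := by
    apply norm_proj_le_one Q hQsa
    rw [hQdef]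
    simp only [mul_sub, sub_mul, mul_one, one_mul, h]
    abel
  have hP1 : ‖H‖ ≤ 1 := norm_proj_le_one H hsa h
  have bound : ∀ (P : E →L[ℂ] E), ‖P‖ ≤ 1 → ∀ v, ‖P (A (P v))‖ ≤ ‖A‖ * ‖P v‖ := by
    intro P hP v
    calc ‖P (A (P v))‖ ≤ ‖P‖ * ‖A (P v)‖ := P.le_opNorm _
    _ ≤ 1 * ‖A (P v)‖ := by
        apply mul_le_mul_of_nonneg_right hP (norm_nonneg _)
    _ = ‖A (P v)‖ := one_mul _
    _ ≤ ‖A‖ * ‖P v‖ := A.le_opNorm _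
  have hna : ‖a‖ ≤ ‖A‖ * ‖Q x‖ := bound Q hQ1 x
  have hnb : ‖b‖ ≤ ‖A‖ * ‖H x‖ := bound H hP1 x
  have h3 : (‖A‖*‖Q x‖)*(‖A‖*‖Q x‖) + (‖A‖*‖H x‖)*(‖A‖*‖H x‖)
      = (‖A‖*‖x‖)*(‖A‖*‖x‖) := by linear_combination (-(‖A‖*‖A‖)) * hx
  have hsq : ‖a + b‖ * ‖a + b‖ ≤ (‖A‖*‖x‖) * (‖A‖*‖x‖) := by
    nlinarith [hab, h3, mul_self_le_mul_self (norm_nonneg a) hna,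
      mul_self_le_mul_self (norm_nonneg b) hnb]
  exact (mul_self_le_mul_self_iff (norm_nonneg _) (mul_nonneg (norm_nonneg A) (norm_nonneg x))).2 hsq

lemma conjAvg_comm (H K : E →L[ℂ] E) (hsaH : IsSelfAdjoint H) (hsaK : IsSelfAdjoint K)
    (hH : H * H = H) (hK : K * K = K) (hc : H * K = K * H) (A : E →L[ℂ] E) :
    conjAvg H (conjAvg K A) = conjAvg K (conjAvg H A) := by
  have h1 : ∀ x : E →L[ℂ] E, K * (H * x) = H * (K * x) := by
    intro x; rw [← mul_assoc, ← hc, mul_assoc]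
  simp only [conjAvg_eq H hsaH hH, conjAvg_eq K hsaK hK]
  simp only [mul_sub, sub_mul, mul_add, add_mul, smul_add, smul_sub, mul_smul_comm,
    smul_mul_assoc, smul_smul, mul_assoc, h1, hc.symm]
  module


lemma norm_conjAvg_le (H : E →L[ℂ] E) (hsa : IsSelfAdjoint H) (h : H * H = H)
    (A : E →L[ℂ] E) : ‖conjAvg H A‖ ≤ ‖A‖ := by
  rw [conjAvg_eq H hsa h A]
  have key : A - H * A - A * H + (2:ℂ) • (H * A * H) = (1 - H) * A * (1 - H) + H * A * H := by
    rw [two_smul]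
    noncomm_ring
  rw [key]
  exact ContinuousLinearMap.opNorm_le_bound _ (norm_nonneg A) (norm_projSum_apply_le H hsa h A)

lemma conjAvg_sub (H : E →L[ℂ] E) (hsa : IsSelfAdjoint H) (h : H * H = H)
    (A B : E →L[ℂ] E) : conjAvg H A - conjAvg H B = conjAvg H (A - B) := by
  simp only [conjAvg_eq H hsa h, mul_sub, sub_mul, smul_sub]
  abel

lemma norm_sub_conjAvg_le (H : E →L[ℂ] E) (hsa : IsSelfAdjoint H) (h : H * H = H)
    (A : E →L[ℂ] E) : ‖A - conjAvg H A‖ ≤ Real.pi * ‖H * A - A * H‖ := by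
  rw [conjAvg_eq H hsa h A]
  have key : A - (A - H * A - A * H + (2:ℂ) • (H * A * H))
      = H * (H * A - A * H) - (H * A - A * H) * H := by
    rw [two_smul]
    simp only [mul_sub, sub_mul, ← mul_assoc, h]
    rw [mul_assoc A H H, h]
    abel
  rw [key]
  have h1 : ‖H * (H * A - A * H) - (H * A - A * H) * H‖
      ≤ ‖H‖ * ‖H * A - A * H‖ + ‖H * A - A * H‖ * ‖H‖ :=
    le_trans (norm_sub_le _ _) (add_le_add (norm_mul_le _ _) (norm_mul_le _ _))
  have h2 : ‖H‖ ≤ 1 := norm_proj_le_one H hsa h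
  nlinarith [norm_nonneg (H * A - A * H), Real.pi_gt_three]

lemma conjAvgOver_empty {n : ℕ} (H : Fin n → (E →L[ℂ] E)) (A : E →L[ℂ] E) :
    conjAvgOver H ∅ A = A := by
  simp [conjAvgOver]

lemma conjAvgOver_singleton {n : ℕ} (H : Fin n → (E →L[ℂ] E)) (r : Fin n) (A : E →L[ℂ] E) :
    conjAvgOver H {r} A = conjAvg (H r) A := by
  simp [conjAvgOver, Finset.sort_singleton]

lemma conjAvgOver_insert {n : ℕ} (H : Fin n → (E →L[ℂ] E))
    (hsa : ∀ j, IsSelfAdjoint (H j)) (hidem : ∀ j, H j * H j = H j)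
    (hcomm : ∀ i j, H i * H j = H j * H i)
    {r : Fin n} {S : Finset (Fin n)} (hr : r ∉ S) (A : E →L[ℂ] E) :
    conjAvgOver H (insert r S) A = conjAvg (H r) (conjAvgOver H S A) := by
  haveI : LeftCommutative (fun (i : Fin n) (B : E →L[ℂ] E) => conjAvg (H i) B) :=
    ⟨fun i j B => conjAvg_comm _ _ (hsa i) (hsa j) (hidem i) (hidem j) (hcomm i j) B⟩
  have hperm : ((insert r S).sort (· ≤ ·)).Perm (r :: S.sort (· ≤ ·)) := by
    refine (Finset.sort_perm_toList _ _).trans ?_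
    refine (Finset.toList_insert hr).trans ?_
    exact List.Perm.cons r (Finset.sort_perm_toList _ _).symm
  unfold conjAvgOver
  rw [hperm.foldr_eq]
  rfl

/-- For commuting orthogonal projections `Hᵣ` and any `r ∈ S`:
`‖A − E_S(A)‖ ≤ ‖A − E_{S∖{r}}(A)‖ + ‖A − E_{{r}}(A)‖`, and consequently
`‖A − E_S(A)‖ ≤ Σ_{r∈S} ‖A − E_{{r}}(A)‖ ≤ π Σ_{r∈S} ‖[Hᵣ, A]‖`. -/
theorem norm_sub_conjAvgOver_le
    {n : ℕ} (H : Fin n → (E →L[ℂ] E))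
    (hsa : ∀ j, IsSelfAdjoint (H j)) (hidem : ∀ j, H j * H j = H j)
    (hcomm : ∀ i j, H i * H j = H j * H i)
    (S : Finset (Fin n)) (A : E →L[ℂ] E) :
    (∀ r ∈ S, ‖A - conjAvgOver H S A‖ ≤
        ‖A - conjAvgOver H (S \ {r}) A‖ + ‖A - conjAvgOver H {r} A‖) ∧
    ‖A - conjAvgOver H S A‖ ≤ ∑ r ∈ S, ‖A - conjAvgOver H {r} A‖ ∧
    ∑ r ∈ S, ‖A - conjAvgOver H {r} A‖ ≤ Real.pi * ∑ r ∈ S, ‖H r * A - A * H r‖ := by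
  have step : ∀ (r : Fin n) (T : Finset (Fin n)), r ∉ T →
      ‖A - conjAvgOver H (insert r T) A‖ ≤
        ‖A - conjAvgOver H T A‖ + ‖A - conjAvgOver H {r} A‖ := by
    intro r T hrT
    rw [conjAvgOver_insert H hsa hidem hcomm hrT A, conjAvgOver_singleton]
    have : A - conjAvg (H r) (conjAvgOver H T A)
        = (A - conjAvg (H r) A) + (conjAvg (H r) A - conjAvg (H r) (conjAvgOver H T A)) := by
      abel
    rw [this]
    refine le_trans (norm_add_le _ _) ?_
    rw [add_comm]
    refine add_le_add_left ?_ _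
    rw [conjAvg_sub (H r) (hsa r) (hidem r)]
    exact le_trans (norm_conjAvg_le (H r) (hsa r) (hidem r) _) le_rfl
  refine ⟨?_, ?_, ?_⟩
  · intro r hr
    have h1 : S = insert r (S \ {r}) := by
      rw [← Finset.erase_eq]
      exact (Finset.insert_erase hr).symm
    have h2 : r ∉ S \ {r} := by
      rw [← Finset.erase_eq]
      exact Finset.notMem_erase r S
    calc ‖A - conjAvgOver H S A‖ = ‖A - conjAvgOver H (insert r (S \ {r})) A‖ := by rw [← h1]
    _ ≤ ‖A - conjAvgOver H (S \ {r}) A‖ + ‖A - conjAvgOver H {r} A‖ := step r _ h2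
  · induction S using Finset.induction_on with
    | empty => simp [conjAvgOver_empty]
    | @insert r T hrT ih =>
      rw [Finset.sum_insert hrT]
      calc ‖A - conjAvgOver H (insert r T) A‖
          ≤ ‖A - conjAvgOver H T A‖ + ‖A - conjAvgOver H {r} A‖ := step r T hrT
      _ ≤ (∑ x ∈ T, ‖A - conjAvgOver H {x} A‖) + ‖A - conjAvgOver H {r} A‖ :=
          add_le_add_left ih _
      _ = ‖A - conjAvgOver H {r} A‖ + ∑ x ∈ T, ‖A - conjAvgOver H {x} A‖ := by ring
  · rw [Finset.mul_sum]
    refine Finset.sum_le_sum fun r _ => ?_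
    rw [conjAvgOver_singleton]
    exact norm_sub_conjAvg_le (H r) (hsa r) (hidem r) A
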